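/- Let u and c be related by c(S) = 1 − Σ_{T: S⊆T⊆N} u(T) for all S ⊆ N, and let A ⊆ P_1(N) be nonempty and closed under supersets with κ_A(S) = Σ_{T∈A, T⊆S} (−1)^{|S\T|}. Then Σ_{T∈A} u(T) ≤ 1 holds if and only if Σ_{S⊆N} κ_A(S)·c(S) ≥ 0. -/

import Mathlib

lemma stmt_17_inner {V : Type*} [DecidableEq V] (T R : Finset V) :
    ∑ S ∈ R.powerset, (if T ⊆ S then ((-1 : ℝ)) ^ (S \ T).card else 0)
      = if T = R then 1 else 0 := by
  by_cases hTR : T ⊆ R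
  · rw [← Finset.sum_filter]
    have himg : R.powerset.filter (fun S => T ⊆ S)
        = (R \ T).powerset.image (fun U => T ∪ U) := by
      ext S
      simp only [Finset.mem_filter, Finset.mem_powerset, Finset.mem_image]
      constructor
      · rintro ⟨hSR, hTS⟩
        exact ⟨S \ T, by simp [Finset.sdiff_subset_sdiff hSR (le_refl T)],
          by rw [Finset.union_sdiff_of_subset hTS]⟩
      · rintro ⟨U, hU, rfl⟩
        exact ⟨Finset.union_subset hTR (hU.trans Finset.sdiff_subset), Finset.subset_union_left⟩
    rw [himg, Finset.sum_image]
    · have : ∀ U ∈ (R \ T).powerset, ((-1 : ℝ)) ^ ((T ∪ U) \ T).card = (-1 : ℝ) ^ U.card := by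
        intro U hU
        rw [Finset.mem_powerset] at hU
        congr 2
        rw [Finset.union_sdiff_left, Finset.sdiff_eq_self_of_disjoint]
        exact Finset.disjoint_left.2 fun a ha hT => (Finset.mem_sdiff.1 (hU ha)).2 hT
      rw [Finset.sum_congr rfl this]
      have := @Finset.sum_powerset_neg_one_pow_card V _ (R \ T)
      have h2 : ((∑ m ∈ (R \ T).powerset, (-1 : ℤ) ^ m.card : ℤ) : ℝ)
          = ∑ m ∈ (R \ T).powerset, (-1 : ℝ) ^ m.card := by push_cast; ring_nf
      rw [← h2, this]
      by_cases hRT : R \ T = ∅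
      · have : T = R := Finset.Subset.antisymm hTR (by
          intro a ha
          by_contra h
          exact (Finset.eq_empty_iff_forall_notMem.1 hRT a) (Finset.mem_sdiff.2 ⟨ha, h⟩))
        simp [hRT, this]
      · have : T ≠ R := fun h => hRT (by simp [h])
        simp [hRT, this]
    · intro U hU U' hU' h
      rw [Finset.mem_coe, Finset.mem_powerset] at hU hU'
      have key : ∀ W : Finset V, W ⊆ R \ T → (T ∪ W) \ T = W := by
        intro W hW
        rw [Finset.union_sdiff_left, Finset.sdiff_eq_self_of_disjoint]
        exact Finset.disjoint_left.2 fun a ha hT => (Finset.mem_sdiff.1 (hW ha)).2 hT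
      rw [← key U hU, ← key U' hU', show T ∪ U = T ∪ U' from h]
  · have hne : T ≠ R := fun h => hTR (h ▸ le_refl T)
    rw [if_neg hne]
    apply Finset.sum_eq_zero
    intro S hS
    rw [Finset.mem_powerset] at hS
    rw [if_neg (fun h => hTR (h.trans hS))]

lemma stmt_17_key {V : Type*} [DecidableEq V]
    (A : Finset (Finset V)) (κ : Finset V → ℝ)
    (hκ : ∀ S : Finset V,
      κ S = ∑ T ∈ A.filter (· ⊆ S), (-1 : ℝ) ^ (S \ T).card)
    (R : Finset V) :
    ∑ S ∈ R.powerset, κ S = if R ∈ A then 1 else 0 := by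
  simp_rw [hκ, Finset.sum_filter]
  rw [Finset.sum_comm]
  rw [Finset.sum_congr rfl (fun T _ => stmt_17_inner T R)]
  rw [Finset.sum_ite_eq' A R (fun _ => (1 : ℝ))]

theorem stmt_17 {V : Type*} [Fintype V] [DecidableEq V]
    (hN : 2 ≤ Fintype.card V)
    (u c : Finset V → ℝ)
    (hc : ∀ S : Finset V,
      c S = 1 - ∑ T : Finset V, if S ⊆ T then u T else 0)
    (A : Finset (Finset V)) (hne : A.Nonempty)
    (hA1 : ∀ S ∈ A, S.Nonempty)
    (hclosed : ∀ S ∈ A, ∀ T : Finset V, S ⊆ T → T ∈ A)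
    (κ : Finset V → ℝ)
    (hκ : ∀ S : Finset V,
      κ S = ∑ T ∈ A.filter (· ⊆ S), (-1 : ℝ) ^ (S \ T).card) :
    (∑ T ∈ A, u T) ≤ 1 ↔ 0 ≤ ∑ S : Finset V, κ S * c S := by
  have hunivA : (Finset.univ : Finset V) ∈ A := by
    obtain ⟨S, hS⟩ := hne
    exact hclosed S hS Finset.univ (Finset.subset_univ S)
  have hmain : ∑ S : Finset V, κ S * c S = 1 - ∑ T ∈ A, u T := by
    have h1 : ∑ S : Finset V, κ S = 1 := by
      have := stmt_17_key A κ hκ (Finset.univ : Finset V)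
      rwa [Finset.powerset_univ, if_pos hunivA] at this
    have h2 : ∀ T : Finset V, (∑ S : Finset V, if S ⊆ T then κ S else 0)
        = if T ∈ A then 1 else 0 := by
      intro T
      rw [← Finset.sum_filter, ← stmt_17_key A κ hκ T]
      congr 1
      ext S
      simp [Finset.mem_powerset]
    simp_rw [hc, mul_sub, mul_one, Finset.sum_sub_distrib, h1, Finset.mul_sum]
    congr 1
    calc ∑ S : Finset V, ∑ T : Finset V, κ S * (if S ⊆ T then u T else 0)
        = ∑ T : Finset V, ∑ S : Finset V, (if S ⊆ T then κ S else 0) * u T := by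
          rw [Finset.sum_comm]
          refine Finset.sum_congr rfl fun T _ => Finset.sum_congr rfl fun S _ => ?_
          by_cases h : S ⊆ T <;> simp [h]
      _ = ∑ T : Finset V, (if T ∈ A then 1 else 0) * u T := by
          refine Finset.sum_congr rfl fun T _ => ?_
          rw [← Finset.sum_mul, h2 T]
      _ = ∑ T ∈ A, u T := by
          have he : ∀ T : Finset V, (if T ∈ A then (1:ℝ) else 0) * u T
              = if T ∈ A then u T else 0 := fun T => by by_cases h : T ∈ A <;> simp [h]
          simp_rw [he]
          rw [Finset.sum_ite_mem, Finset.univ_inter]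
  rw [hmain]
  constructor <;> intro h <;> linarith
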